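/- Let n ≡ 7 (mod 16). Then there exist positive integers u and v such that F_n = u^2 + 9 v^2. -/

import Mathlib

theorem fib_repr_of_seven_mod_sixteen (n : ℕ) (h : n % 16 = 7) :
    ∃ u v : ℕ, 0 < u ∧ 0 < v ∧ Nat.fib n = u ^ 2 + 9 * v ^ 2 := by
  set k := n / 16 with hk
  have hn : n = 2 * (8 * k + 3) + 1 := by omega
  have hdvd : (3 : ℕ) ∣ Nat.fib (8 * k + 4) := by
    have : Nat.fib 4 ∣ Nat.fib (8 * k + 4) := Nat.fib_dvd 4 (8 * k + 4) ⟨2 * k + 1, by ring⟩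
    simpa [show Nat.fib 4 = 3 by rfl] using this
  obtain ⟨v, hv⟩ := hdvd
  refine ⟨Nat.fib (8 * k + 3), v, ?_, ?_, ?_⟩
  · exact Nat.fib_pos.mpr (by omega)
  · have h3 : 0 < Nat.fib (8 * k + 4) := Nat.fib_pos.mpr (by omega)
    omega
  · rw [hn, Nat.fib_two_mul_add_one]
    have : 8 * k + 3 + 1 = 8 * k + 4 := by ring
    rw [this, hv]
    ring
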